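/- Let Q be a transfer operator, let d ≥ 2 and q ≥ 2 be integers, and regard S_q as a map on the open set of vectors in ℝ^q with strictly positive entries. Then the Fréchet derivative D S_q[eq] of S_q at the barycenter eq maps the hyperplane T = {v ∈ ℝ^q : ∑_i v_i = 0} into itself, and the set of eigenvalues of the restriction of D S_q[eq] to T equals { d·Q̂(2πj/q)/Q̂(0) : j = 1, …, ⌊q/2⌋ }. -/

import Mathlib

set_option maxHeartbeats 1000000

open scoped BigOperators
open Real

/-- Fourier transform of a transfer operator `Q : ℤ → ℝ`. -/
noncomputable def fourierTransform (Q : ℤ → ℝ) (k : ℝ) : ℝ :=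
  ∑' n : ℤ, Q n * Real.cos (n * k)

/-- The mod-`q` fuzzy transfer operator, a `q × q` circulant matrix. -/
noncomputable def fuzzyOp (Q : ℤ → ℝ) (q : ℕ) : Matrix (Fin q) (Fin q) ℝ :=
  fun r s => ∑' m : ℤ, Q ((r : ℤ) - (s : ℤ) + q * m)

/-- The map `S_q(u) = Q^q u^{⊙d} / (Q̂(0) · ‖u^{⊙d}‖₁)`. -/
noncomputable def Smap (Q : ℤ → ℝ) (q d : ℕ) (u : Fin q → ℝ) : Fin q → ℝ :=
  fun i => (fuzzyOp Q q).mulVec (fun j => u j ^ d) i /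
    (fourierTransform Q 0 * ∑ j, |u j ^ d|)

/-- The barycenter `eq = (1/q, …, 1/q)` of the unit simplex. -/
noncomputable def barycenter (q : ℕ) : Fin q → ℝ := fun _ => 1 / (q : ℝ)

/-- Reindexing equivalence `(s, m) ↦ r - s + q m`. -/
def reidx (q : ℕ) [NeZero q] (r : ℤ) : (Fin q × ℤ) ≃ ℤ :=
  ((Equiv.prodComm (Fin q) ℤ).trans
    ((Equiv.neg ℤ).prodCongr (Equiv.refl (Fin q)))).trans
    ((Int.divModEquiv q).symm.trans (Equiv.subLeft r))

lemma reidx_apply (q : ℕ) [NeZero q] (r : ℤ) (s : Fin q) (m : ℤ) :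
    reidx q r (s, m) = r - s + q * m := by
  simp [reidx, Int.divModEquiv, Equiv.subLeft]
  ring

lemma circ_sum (Q : ℤ → ℝ) (hQ : Summable Q) (q : ℕ) (hq : q ≠ 0) (r : Fin q)
    (φ : ℤ → ℝ) (hφ : ∀ n m : ℤ, φ (n + q * m) = φ n) (C : ℝ) (hb : ∀ n, |φ n| ≤ C) :
    ∑ s : Fin q, fuzzyOp Q q r s * φ s = ∑' n : ℤ, Q n * φ ((r : ℤ) - n) := by
  haveI : NeZero q := ⟨hq⟩
  set h : ℤ → ℝ := fun n => Q n * φ ((r : ℤ) - n) with hh_def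
  have hh : Summable h := by
    rw [← summable_abs_iff]
    refine Summable.of_nonneg_of_le (fun n => abs_nonneg _) (fun n => ?_)
      ((hQ.abs).mul_right C)
    rw [abs_mul]
    exact mul_le_mul_of_nonneg_left (hb _) (abs_nonneg _)
  have key : ∀ p : Fin q × ℤ, Q ((r : ℤ) - p.1 + q * p.2) * φ p.1 = h (reidx q r p) := by
    rintro ⟨s, m⟩
    simp only [hh_def, reidx_apply]
    congr 1
    have h1 : (r : ℤ) - ((r : ℤ) - s + q * m) = (s : ℤ) + q * (-m) := by ring
    rw [h1, hφ]
  have hg : Summable (fun p : Fin q × ℤ => Q ((r : ℤ) - p.1 + q * p.2) * φ p.1) := by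
    refine (summable_congr key).2 ?_
    exact (Equiv.summable_iff (reidx q r)).2 hh
  calc ∑ s : Fin q, fuzzyOp Q q r s * φ s
      = ∑ s : Fin q, ∑' m : ℤ, Q ((r : ℤ) - s + q * m) * φ s := by
        refine Finset.sum_congr rfl fun s _ => ?_
        rw [fuzzyOp, ← tsum_mul_right]
    _ = ∑' s : Fin q, ∑' m : ℤ, Q ((r : ℤ) - s + q * m) * φ s := (tsum_fintype _).symm
    _ = ∑' p : Fin q × ℤ, Q ((r : ℤ) - p.1 + q * p.2) * φ p.1 := (hg.tsum_prod).symm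
    _ = ∑' p : Fin q × ℤ, h (reidx q r p) := tsum_congr key
    _ = ∑' n : ℤ, h n := (reidx q r).tsum_eq h


section trig
variable (Q : ℤ → ℝ)

/-- The sine sum vanishes by symmetry. -/
lemma sin_sum_zero (hsymm : ∀ n : ℤ, Q (-n) = Q n) (θ : ℝ) : ∑' n : ℤ, Q n * Real.sin (n * θ) = 0 := by
  have h := (Equiv.neg ℤ).tsum_eq (fun n : ℤ => Q n * Real.sin (n * θ))
  simp only [Equiv.neg_apply] at h
  have h2 : ∀ n : ℤ, Q (-n) * Real.sin ((-n : ℤ) * θ) = -(Q n * Real.sin (n * θ)) := by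
    intro n
    rw [hsymm]
    push_cast
    rw [neg_mul, Real.sin_neg]
    ring
  rw [tsum_congr h2, tsum_neg] at h
  linarith

lemma summable_trig (hsum : Summable Q) (f : ℝ → ℝ) (hf : ∀ x, |f x| ≤ 1) (θ : ℝ) :
    Summable (fun n : ℤ => Q n * f (n * θ)) := by
  rw [← summable_abs_iff]
  refine Summable.of_nonneg_of_le (fun n => abs_nonneg _) (fun n => ?_) hsum.abs
  rw [abs_mul]
  calc |Q n| * |f (n * θ)| ≤ |Q n| * 1 := mul_le_mul_of_nonneg_left (hf _) (abs_nonneg _)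
    _ = |Q n| := mul_one _

/-- Splitting a shifted cosine sum. -/
lemma tsum_cos_shift (hsum : Summable Q) (x θ : ℝ) :
    ∑' n : ℤ, Q n * Real.cos (x - n * θ)
      = Real.cos x * fourierTransform Q θ + Real.sin x * ∑' n : ℤ, Q n * Real.sin (n * θ) := by
  have h1 : ∀ n : ℤ, Q n * Real.cos (x - n * θ)
      = Real.cos x * (Q n * Real.cos (n * θ)) + Real.sin x * (Q n * Real.sin (n * θ)) := by
    intro n
    rw [Real.cos_sub]
    ring
  rw [tsum_congr h1]
  rw [Summable.tsum_add ((summable_trig Q hsum Real.cos (fun x => abs_cos_le_one x) θ).mul_left _)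
    ((summable_trig Q hsum Real.sin (fun x => abs_sin_le_one x) θ).mul_left _)]
  rw [tsum_mul_left, tsum_mul_left, fourierTransform]

lemma tsum_sin_shift (hsum : Summable Q) (x θ : ℝ) :
    ∑' n : ℤ, Q n * Real.sin (x - n * θ)
      = Real.sin x * fourierTransform Q θ - Real.cos x * ∑' n : ℤ, Q n * Real.sin (n * θ) := by
  have h1 : ∀ n : ℤ, Q n * Real.sin (x - n * θ)
      = Real.sin x * (Q n * Real.cos (n * θ)) - Real.cos x * (Q n * Real.sin (n * θ)) := by
    intro n
    rw [Real.sin_sub]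
    ring
  rw [tsum_congr h1]
  rw [Summable.tsum_sub ((summable_trig Q hsum Real.cos (fun x => abs_cos_le_one x) θ).mul_left _)
    ((summable_trig Q hsum Real.sin (fun x => abs_sin_le_one x) θ).mul_left _)]
  rw [tsum_mul_left, tsum_mul_left, fourierTransform]

end trig

/-- Geometric cosine sum over a full period. -/
lemma cos_geom_sum (q : ℕ) (hq : q ≠ 0) (m : ℤ) (hm : ¬ ((q : ℤ) ∣ m)) :
    ∑ s ∈ Finset.range q, Real.cos (2 * π * m * s / q) = 0 := by
  set ζ : ℂ := Complex.exp ((2 * π * m / q : ℝ) * Complex.I) with hζ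
  have hζq : ζ ^ q = 1 := by
    rw [hζ, ← Complex.exp_nat_mul]
    have : (q : ℂ) * ((2 * π * m / q : ℝ) * Complex.I) = (m : ℤ) * (2 * π * Complex.I) := by
      push_cast
      have : (q : ℂ) ≠ 0 := by exact_mod_cast Nat.cast_ne_zero.2 hq
      field_simp
    rw [this]
    exact_mod_cast Complex.exp_int_mul_two_pi_mul_I m
  have hζ1 : ζ ≠ 1 := by
    rw [hζ]
    intro h
    rw [Complex.exp_eq_one_iff] at h
    obtain ⟨k, hk⟩ := h
    apply hm
    refine ⟨k, ?_⟩
    have hq' : (q : ℂ) ≠ 0 := by exact_mod_cast Nat.cast_ne_zero.2 hq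
    have hπ : (π : ℂ) ≠ 0 := by exact_mod_cast Real.pi_ne_zero
    have hI : Complex.I ≠ 0 := Complex.I_ne_zero
    have him := congrArg Complex.im hk
    push_cast at him
    simp [Complex.mul_im, Complex.mul_re] at him
    have hqr : (q : ℝ) ≠ 0 := Nat.cast_ne_zero.2 hq
    have : (m : ℝ) = (q : ℝ) * (k : ℝ) := by
      field_simp at him
      nlinarith [Real.pi_pos, him]
    exact_mod_cast this
  have hgeom : ∑ s ∈ Finset.range q, ζ ^ s = 0 := by
    rw [geom_sum_eq hζ1, hζq]
    simp
  have hre : ∀ s : ℕ, (ζ ^ s).re = Real.cos (2 * π * m * s / q) := by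
    intro s
    rw [hζ, ← Complex.exp_nat_mul]
    have : (s : ℂ) * ((2 * π * m / q : ℝ) * Complex.I) = ((2 * π * m * s / q : ℝ) : ℂ) * Complex.I := by
      push_cast
      ring
    rw [this, Complex.exp_ofReal_mul_I_re]
  calc ∑ s ∈ Finset.range q, Real.cos (2 * π * m * s / q)
      = ∑ s ∈ Finset.range q, (ζ ^ s).re := by
        exact Finset.sum_congr rfl fun s _ => (hre s).symm
    _ = (∑ s ∈ Finset.range q, ζ ^ s).re := by rw [Complex.re_sum]
    _ = 0 := by rw [hgeom]; rfl

section rows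
variable (Q : ℤ → ℝ)

/-- Row sums of the fuzzy operator equal `Q̂(0)`. -/
lemma row_sum (hsum : Summable Q) (q : ℕ) (hq : q ≠ 0) (r : Fin q) :
    ∑ s : Fin q, fuzzyOp Q q r s = fourierTransform Q 0 := by
  have h := circ_sum Q hsum q hq r (fun _ => 1) (fun _ _ => rfl) 1 (fun _ => by norm_num)
  simp only [mul_one] at h
  rw [h, fourierTransform]
  exact tsum_congr fun n => by simp

/-- `Q̂(0) > 0`. -/
lemma ft0_pos (hpos : ∀ n : ℤ, 0 < Q n) (hsum : Summable Q) :
    0 < fourierTransform Q 0 := by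
  rw [fourierTransform]
  have h : ∀ n : ℤ, Q n * Real.cos (n * 0) = Q n := fun n => by simp
  rw [tsum_congr h]
  exact Summable.tsum_pos hsum (fun n => (hpos n).le) 0 (hpos 0)

/-- The fuzzy operator is symmetric. -/
lemma fuzzy_symm (hsymm : ∀ n : ℤ, Q (-n) = Q n) (q : ℕ) (r s : Fin q) :
    fuzzyOp Q q r s = fuzzyOp Q q s r := by
  rw [fuzzyOp, fuzzyOp]
  have h := (Equiv.neg ℤ).tsum_eq (fun m : ℤ => Q ((s : ℤ) - (r : ℤ) + q * m))
  simp only [Equiv.neg_apply] at h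
  rw [← h]
  refine tsum_congr fun m => ?_
  rw [← hsymm]
  congr 1
  ring

/-- Row action on cosine characters. -/
lemma Arow_cos (hsymm : ∀ n : ℤ, Q (-n) = Q n) (hsum : Summable Q)
    (q : ℕ) (hq : q ≠ 0) (j : ℕ) (r : Fin q) :
    ∑ s : Fin q, fuzzyOp Q q r s * Real.cos ((s : ℕ) * (2 * π * j / q))
      = fourierTransform Q (2 * π * j / q) * Real.cos ((r : ℕ) * (2 * π * j / q)) := by
  have hqr : (q : ℝ) ≠ 0 := Nat.cast_ne_zero.2 hq
  have hper : ∀ n m : ℤ, Real.cos (((n + q * m : ℤ) : ℝ) * (2 * π * j / q))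
      = Real.cos ((n : ℝ) * (2 * π * j / q)) := by
    intro n m
    have harg : ((n + q * m : ℤ) : ℝ) * (2 * π * j / q)
        = (n : ℝ) * (2 * π * j / q) + ((j * m : ℤ) : ℝ) * (2 * π) := by
      push_cast
      field_simp
    rw [harg, Real.cos_add_int_mul_two_pi]
  have h := circ_sum Q hsum q hq r (fun n : ℤ => Real.cos ((n : ℝ) * (2 * π * j / q)))
    hper 1 (fun n => Real.abs_cos_le_one _)
  have hcast : ∀ s : Fin q, (((s : ℤ) : ℝ)) = ((s : ℕ) : ℝ) := fun s => by push_cast; rfl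
  rw [show (fun s : Fin q => fuzzyOp Q q r s * Real.cos (((s : ℤ) : ℝ) * (2 * π * j / q)))
    = fun s : Fin q => fuzzyOp Q q r s * Real.cos (((s : ℕ) : ℝ) * (2 * π * j / q)) from
      funext fun s => by rw [hcast]] at h
  rw [h]
  have h2 : (∑' n : ℤ, Q n * (fun n : ℤ => Real.cos ((n : ℝ) * (2 * π * j / q))) ((r : ℤ) - n))
      = ∑' n : ℤ, Q n * Real.cos (((r : ℕ) : ℝ) * (2 * π * j / q) - (n : ℝ) * (2 * π * j / q)) := by
    refine tsum_congr fun n => ?_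
    show Q n * Real.cos ((((r : ℤ) - n : ℤ) : ℝ) * (2 * π * j / q)) = _
    have harg : ((((r : ℤ) - n : ℤ)) : ℝ) * (2 * π * j / q)
        = ((r : ℕ) : ℝ) * (2 * π * j / q) - (n : ℝ) * (2 * π * j / q) := by
      push_cast
      ring
    rw [harg]
  rw [h2]
  rw [tsum_cos_shift Q hsum, sin_sum_zero Q hsymm]
  ring

/-- Row action on sine characters. -/
lemma Arow_sin (hsymm : ∀ n : ℤ, Q (-n) = Q n) (hsum : Summable Q)
    (q : ℕ) (hq : q ≠ 0) (j : ℕ) (r : Fin q) :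
    ∑ s : Fin q, fuzzyOp Q q r s * Real.sin ((s : ℕ) * (2 * π * j / q))
      = fourierTransform Q (2 * π * j / q) * Real.sin ((r : ℕ) * (2 * π * j / q)) := by
  have hqr : (q : ℝ) ≠ 0 := Nat.cast_ne_zero.2 hq
  have hper : ∀ n m : ℤ, Real.sin (((n + q * m : ℤ) : ℝ) * (2 * π * j / q))
      = Real.sin ((n : ℝ) * (2 * π * j / q)) := by
    intro n m
    have harg : ((n + q * m : ℤ) : ℝ) * (2 * π * j / q)
        = (n : ℝ) * (2 * π * j / q) + ((j * m : ℤ) : ℝ) * (2 * π) := by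
      push_cast
      field_simp
    rw [harg, Real.sin_add_int_mul_two_pi]
  have h := circ_sum Q hsum q hq r (fun n : ℤ => Real.sin ((n : ℝ) * (2 * π * j / q)))
    hper 1 (fun n => Real.abs_sin_le_one _)
  have hcast : ∀ s : Fin q, (((s : ℤ) : ℝ)) = ((s : ℕ) : ℝ) := fun s => by push_cast; rfl
  rw [show (fun s : Fin q => fuzzyOp Q q r s * Real.sin (((s : ℤ) : ℝ) * (2 * π * j / q)))
    = fun s : Fin q => fuzzyOp Q q r s * Real.sin (((s : ℕ) : ℝ) * (2 * π * j / q)) from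
      funext fun s => by rw [hcast]] at h
  rw [h]
  have h2 : (∑' n : ℤ, Q n * (fun n : ℤ => Real.sin ((n : ℝ) * (2 * π * j / q))) ((r : ℤ) - n))
      = ∑' n : ℤ, Q n * Real.sin (((r : ℕ) : ℝ) * (2 * π * j / q) - (n : ℝ) * (2 * π * j / q)) := by
    refine tsum_congr fun n => ?_
    show Q n * Real.sin ((((r : ℤ) - n : ℤ) : ℝ) * (2 * π * j / q)) = _
    have harg : ((((r : ℤ) - n : ℤ)) : ℝ) * (2 * π * j / q)
        = ((r : ℕ) : ℝ) * (2 * π * j / q) - (n : ℝ) * (2 * π * j / q) := by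
      push_cast
      ring
    rw [harg]
  rw [h2]
  rw [tsum_sin_shift Q hsum, sin_sum_zero Q hsymm]
  ring

end rows
section fder
variable (Q : ℤ → ℝ)

noncomputable def derivMat (Q : ℤ → ℝ) (q d : ℕ) : Matrix (Fin q) (Fin q) ℝ :=
  fun i s => ((d : ℝ) / fourierTransform Q 0) * fuzzyOp Q q i s - (d : ℝ) / q

noncomputable def Lmap (Q : ℤ → ℝ) (q d : ℕ) : (Fin q → ℝ) →L[ℝ] (Fin q → ℝ) :=
  LinearMap.toContinuousLinearMap (Matrix.mulVecLin (derivMat Q q d))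

lemma Lmap_apply (q d : ℕ) (v : Fin q → ℝ) (i : Fin q) :
    Lmap Q q d v i = ((d : ℝ) / fourierTransform Q 0) * (∑ s, fuzzyOp Q q i s * v s)
      - ((d : ℝ) / q) * ∑ s, v s := by
  simp only [Lmap, LinearMap.coe_toContinuousLinearMap', Matrix.mulVecLin_apply,
    Matrix.mulVec, dotProduct, derivMat, sub_mul, Finset.sum_sub_distrib,
    Finset.mul_sum]
  congr 1
  all_goals exact Finset.sum_congr rfl fun s _ => by ring

lemma hasF (hpos : ∀ n : ℤ, 0 < Q n) (hsum : Summable Q)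
    (d q : ℕ) (hd : 2 ≤ d) (hq : 2 ≤ q) :
    HasFDerivAt (Smap Q q d) (Lmap Q q d) (barycenter q) := by
  have hq0 : q ≠ 0 := by omega
  have hqr : (0:ℝ) < q := by positivity
  have hc : 0 < fourierTransform Q 0 := ft0_pos Q hpos hsum
  set c : ℝ := fourierTransform Q 0 with hcdef
  set A : Matrix (Fin q) (Fin q) ℝ := fuzzyOp Q q with hAdef
  set t : ℝ := 1 / q with htdef
  have ht : 0 < t := by positivity
  set e : Fin q → ℝ := barycenter q with hedef
  -- the function without absolute values
  set F : (Fin q → ℝ) → (Fin q → ℝ) :=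
    fun u i => (∑ s, A i s * u s ^ d) * (c * ∑ s, u s ^ d)⁻¹ with hFdef
  have hF : HasFDerivAt F (Lmap Q q d) e := by
    rw [hasFDerivAt_pi']
    intro i
    have hpow : ∀ s : Fin q, HasFDerivAt (fun u : Fin q → ℝ => u s ^ d)
        (((d : ℝ) * t ^ (d - 1)) • (ContinuousLinearMap.proj s : (Fin q → ℝ) →L[ℝ] ℝ)) e := by
      intro s
      have h1 : HasFDerivAt (fun u : Fin q → ℝ => u s)
          (ContinuousLinearMap.proj s : (Fin q → ℝ) →L[ℝ] ℝ) e :=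
        (ContinuousLinearMap.proj s : (Fin q → ℝ) →L[ℝ] ℝ).hasFDerivAt
      exact (hasDerivAt_pow d t).comp_hasFDerivAt e h1
    have hN : HasFDerivAt (fun u : Fin q → ℝ => ∑ s : Fin q, A i s * u s ^ d)
        (∑ s : Fin q, A i s • (((d : ℝ) * t ^ (d - 1)) •
          (ContinuousLinearMap.proj s : (Fin q → ℝ) →L[ℝ] ℝ))) e :=
      HasFDerivAt.fun_sum fun s _ => (hpow s).const_mul (A i s)
    have hD : HasFDerivAt (fun u : Fin q → ℝ => c * ∑ s : Fin q, u s ^ d)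
        (c • ∑ s : Fin q, (((d : ℝ) * t ^ (d - 1)) •
          (ContinuousLinearMap.proj s : (Fin q → ℝ) →L[ℝ] ℝ))) e :=
      (HasFDerivAt.fun_sum fun s _ => hpow s).const_mul c
    have hDe : c * ∑ s : Fin q, (e s) ^ d = c * (q * t ^ d) := by
      congr 1
      show ∑ _s : Fin q, t ^ d = (q : ℝ) * t ^ d
      rw [Finset.sum_const, Finset.card_univ, Fintype.card_fin, nsmul_eq_mul]
    have hDne : c * ∑ s : Fin q, (e s) ^ d ≠ 0 := by
      rw [hDe]; positivity
    have hinv := (hasDerivAt_inv hDne).comp_hasFDerivAt e hD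
    have hmul := hN.mul hinv
    refine HasFDerivAt.congr_fderiv hmul ?_
    ext v
    simp only [ContinuousLinearMap.add_apply, ContinuousLinearMap.coe_smul', Pi.smul_apply,
      ContinuousLinearMap.coe_sum', Finset.sum_apply, ContinuousLinearMap.smul_apply,
      ContinuousLinearMap.proj_apply, ContinuousLinearMap.coe_comp', Function.comp_apply,
      smul_eq_mul]
    obtain ⟨d', rfl⟩ : ∃ d', d = d' + 1 := ⟨d - 1, by omega⟩
    simp only [Nat.add_sub_cancel]
    have hrow : ∑ s : Fin q, A i s = c := row_sum Q hsum q hq0 i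
    have hsum1 : ∑ s : Fin q, e s ^ (d' + 1) = (q : ℝ) * t ^ (d' + 1) := by
      show ∑ _s : Fin q, t ^ (d' + 1) = _
      rw [Finset.sum_const, Finset.card_univ, Fintype.card_fin, nsmul_eq_mul]
    have hsum2 : ∑ s : Fin q, A i s * e s ^ (d' + 1) = c * t ^ (d' + 1) := by
      rw [← hrow, Finset.sum_mul]
      exact Finset.sum_congr rfl fun s _ => rfl
    have hsum3 : ∑ x : Fin q, ((d' + 1 : ℕ) : ℝ) * t ^ d' * v x
        = ((d' + 1 : ℕ) : ℝ) * t ^ d' * ∑ x : Fin q, v x := by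
      rw [Finset.mul_sum]
    have hsum4 : ∑ x : Fin q, A i x * (((d' + 1 : ℕ) : ℝ) * t ^ d' * v x)
        = ((d' + 1 : ℕ) : ℝ) * t ^ d' * ∑ x : Fin q, A i x * v x := by
      rw [Finset.mul_sum]
      exact Finset.sum_congr rfl fun s _ => by ring
    rw [hsum1, hsum2, hsum3, hsum4, Lmap_apply, ← hAdef, ← hcdef]
    simp only [htdef]
    have hqne : (q : ℝ) ≠ 0 := ne_of_gt hqr
    have hcne : c ≠ 0 := ne_of_gt hc
    field_simp
    have hqq : (q:ℝ) * (q:ℝ)⁻¹ = 1 := mul_inv_cancel₀ hqne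
    linear_combination ((↑q)⁻¹ ^ d' * c * ∑ x, v x - ↑q * (↑q)⁻¹ ^ d' * ∑ x, A i x * v x) * hqq
  have hU : IsOpen {u : Fin q → ℝ | ∀ i, 0 < u i} := by
    have hset : {u : Fin q → ℝ | ∀ i, 0 < u i} = ⋂ i, {u : Fin q → ℝ | 0 < u i} := by
      ext u; simp [Set.mem_iInter]
    rw [hset]
    exact isOpen_iInter_of_finite fun i => isOpen_lt continuous_const (continuous_apply i)
  have heU : e ∈ {u : Fin q → ℝ | ∀ i, 0 < u i} := fun i => by
    show (0 : ℝ) < 1 / (q : ℝ)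
    positivity
  have hev : Smap Q q d =ᶠ[nhds e] F := by
    refine Filter.eventuallyEq_of_mem (hU.mem_nhds heU) fun u hu => ?_
    funext i
    have habs : ∀ j : Fin q, |u j ^ d| = u j ^ d := fun j => abs_of_pos (pow_pos (hu j) d)
    show (fuzzyOp Q q).mulVec (fun j => u j ^ d) i /
        (fourierTransform Q 0 * ∑ j, |u j ^ d|) = _
    simp only [habs]
    rw [div_eq_mul_inv]
    rfl
  exact hF.congr_of_eventuallyEq hev
end fder

/-- Orthogonality / inversion sum. -/
lemma inv_sum (q : ℕ) (hq : q ≠ 0) (s t : Fin q) :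
    ∑ j ∈ Finset.range q, Real.cos (2 * π * (((s : ℕ) : ℝ) - ((t : ℕ) : ℝ)) * j / q)
      = if s = t then (q : ℝ) else 0 := by
  by_cases hst : s = t
  · subst hst
    simp
  · rw [if_neg hst]
    have h1 : ((s : ℕ) : ℤ) - ((t : ℕ) : ℤ) ≠ 0 := by
      have : (s : ℕ) ≠ (t : ℕ) := fun h => hst (Fin.ext h)
      omega
    have hm : ¬ ((q : ℤ) ∣ ((s : ℕ) : ℤ) - ((t : ℕ) : ℤ)) := by
      intro hdvd
      have h2 : (q : ℤ) ∣ |((s : ℕ) : ℤ) - ((t : ℕ) : ℤ)| := (dvd_abs _ _).2 hdvd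
      have h3 := Int.le_of_dvd (abs_pos.2 h1) h2
      have hs := s.isLt
      have ht := t.isLt
      have h4 : |((s : ℕ) : ℤ) - ((t : ℕ) : ℤ)| < (q : ℤ) := by
        rw [abs_sub_lt_iff]
        omega
      omega
    have h := cos_geom_sum q hq (((s : ℕ) : ℤ) - ((t : ℕ) : ℤ)) hm
    rw [← h]
    refine Finset.sum_congr rfl fun j _ => ?_
    congr 1
    push_cast
    ring

/-- Reflection symmetry of the Fourier transform. -/
lemma ft_refl (Q : ℤ → ℝ) (q j : ℕ) (hq : q ≠ 0) (hj : j ≤ q) :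
    fourierTransform Q (2 * π * ((q - j : ℕ) : ℝ) / q) = fourierTransform Q (2 * π * j / q) := by
  have hqr : (q : ℝ) ≠ 0 := Nat.cast_ne_zero.2 hq
  unfold fourierTransform
  refine tsum_congr fun n => ?_
  congr 1
  have hcast : ((q - j : ℕ) : ℝ) = (q : ℝ) - j := by
    push_cast [hj]
    ring
  rw [hcast]
  have harg : (n : ℝ) * (2 * π * ((q : ℝ) - j) / q)
      = (n : ℝ) * (2 * π) - (n : ℝ) * (2 * π * j / q) := by
    field_simp
  rw [harg]
  rw [Real.cos_int_mul_two_pi_sub]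

theorem stmt0 (Q : ℤ → ℝ) (hpos : ∀ n : ℤ, 0 < Q n) (hsymm : ∀ n : ℤ, Q (-n) = Q n)
    (hsum : Summable Q) (d q : ℕ) (hd : 2 ≤ d) (hq : 2 ≤ q) :
    (∀ v : Fin q → ℝ, ∑ i, v i = 0 →
      ∑ i, fderiv ℝ (Smap Q q d) (barycenter q) v i = 0) ∧
    {μ : ℝ | ∃ v : Fin q → ℝ, v ≠ 0 ∧ ∑ i, v i = 0 ∧
        fderiv ℝ (Smap Q q d) (barycenter q) v = μ • v}
      = {μ : ℝ | ∃ j : ℕ, 1 ≤ j ∧ j ≤ q / 2 ∧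
          μ = d * fourierTransform Q (2 * Real.pi * j / q) / fourierTransform Q 0} := by
  have hq0 : q ≠ 0 := by omega
  have hqR : (0:ℝ) < q := by exact_mod_cast Nat.pos_of_ne_zero hq0
  have hqne : (q:ℝ) ≠ 0 := ne_of_gt hqR
  have hc : 0 < fourierTransform Q 0 := ft0_pos Q hpos hsum
  have hcne : fourierTransform Q 0 ≠ 0 := ne_of_gt hc
  have hdR : (0:ℝ) < d := by exact_mod_cast (by omega : 0 < d)
  have hdne : (d:ℝ) ≠ 0 := ne_of_gt hdR
  have hfder : fderiv ℝ (Smap Q q d) (barycenter q) = Lmap Q q d :=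
    (hasF Q hpos hsum d q hd hq).fderiv
  have hcol : ∀ s : Fin q, ∑ i : Fin q, fuzzyOp Q q i s = fourierTransform Q 0 := by
    intro s
    rw [show (∑ i : Fin q, fuzzyOp Q q i s) = ∑ i : Fin q, fuzzyOp Q q s i from
      Finset.sum_congr rfl fun i _ => fuzzy_symm Q hsymm q i s]
    exact row_sum Q hsum q hq0 s
  constructor
  · -- preservation of the trace-zero hyperplane
    intro v hv
    rw [hfder]
    have h1 : ∀ i : Fin q, Lmap Q q d v i
        = ((d:ℝ) / fourierTransform Q 0) * ∑ s : Fin q, fuzzyOp Q q i s * v s := by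
      intro i
      rw [Lmap_apply, hv, mul_zero, sub_zero]
    rw [Finset.sum_congr rfl fun i _ => h1 i, ← Finset.mul_sum, Finset.sum_comm]
    have h2 : ∀ s : Fin q, ∑ i : Fin q, fuzzyOp Q q i s * v s = fourierTransform Q 0 * v s := by
      intro s
      rw [← Finset.sum_mul, hcol s]
    rw [Finset.sum_congr rfl fun s _ => h2 s, ← Finset.mul_sum, hv, mul_zero, mul_zero]
  · ext μ
    simp only [Set.mem_setOf_eq]
    set c := fourierTransform Q 0 with hcdef
    constructor
    · rintro ⟨v, hv0, hσ, heig⟩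
      rw [hfder] at heig
      have hAv : ∀ i : Fin q,
          ((d:ℝ) / c) * (∑ s : Fin q, fuzzyOp Q q i s * v s) = μ * v i := by
        intro i
        have h1 := congrFun heig i
        rw [Lmap_apply, hσ, mul_zero, sub_zero] at h1
        simpa using h1
      set C : ℕ → ℝ :=
        fun j => ∑ i : Fin q, v i * Real.cos (((i:ℕ):ℝ) * (2 * π * j / q)) with hCdef
      set S : ℕ → ℝ :=
        fun j => ∑ i : Fin q, v i * Real.sin (((i:ℕ):ℝ) * (2 * π * j / q)) with hSdef
      have hCj : ∀ j : ℕ, μ * C j = ((d:ℝ)/c) * fourierTransform Q (2 * π * j / q) * C j := by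
        intro j
        calc μ * C j = ∑ i : Fin q, (μ * v i) * Real.cos (((i:ℕ):ℝ) * (2 * π * j / q)) := by
              rw [hCdef]
              rw [Finset.mul_sum]
              exact Finset.sum_congr rfl fun i _ => by ring
          _ = ∑ i : Fin q, (((d:ℝ)/c) * ∑ s : Fin q, fuzzyOp Q q i s * v s)
                * Real.cos (((i:ℕ):ℝ) * (2 * π * j / q)) :=
              Finset.sum_congr rfl fun i _ => by rw [hAv i]
          _ = ((d:ℝ)/c) * ∑ i : Fin q, ∑ s : Fin q,
                (fuzzyOp Q q i s * Real.cos (((i:ℕ):ℝ) * (2 * π * j / q))) * v s := by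
              rw [Finset.mul_sum]
              refine Finset.sum_congr rfl fun i _ => ?_
              have hinner : ∑ s : Fin q,
                  (fuzzyOp Q q i s * Real.cos (((i:ℕ):ℝ) * (2 * π * j / q))) * v s
                  = (∑ s : Fin q, fuzzyOp Q q i s * v s) * Real.cos (((i:ℕ):ℝ) * (2 * π * j / q)) := by
                rw [Finset.sum_mul]
                exact Finset.sum_congr rfl fun s _ => by ring
              rw [hinner]
              ring
          _ = ((d:ℝ)/c) * ∑ s : Fin q, ∑ i : Fin q,
                (fuzzyOp Q q i s * Real.cos (((i:ℕ):ℝ) * (2 * π * j / q))) * v s := by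
              rw [Finset.sum_comm]
          _ = ((d:ℝ)/c) * ∑ s : Fin q,
                (∑ i : Fin q, fuzzyOp Q q s i * Real.cos (((i:ℕ):ℝ) * (2 * π * j / q))) * v s := by
              congr 1
              refine Finset.sum_congr rfl fun s _ => ?_
              rw [Finset.sum_mul]
              exact Finset.sum_congr rfl fun i _ => by rw [fuzzy_symm Q hsymm q i s]
          _ = ((d:ℝ)/c) * ∑ s : Fin q,
                (fourierTransform Q (2 * π * j / q) * Real.cos (((s:ℕ):ℝ) * (2 * π * j / q))) * v s := by
              congr 1
              exact Finset.sum_congr rfl fun s _ => by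
                rw [Arow_cos Q hsymm hsum q hq0 j s]
          _ = ((d:ℝ)/c) * fourierTransform Q (2 * π * j / q) * C j := by
              rw [hCdef]
              show _ = ((d:ℝ)/c) * fourierTransform Q (2 * π * j / q)
                * ∑ i : Fin q, v i * Real.cos (((i:ℕ):ℝ) * (2 * π * j / q))
              rw [Finset.mul_sum, Finset.mul_sum]
              exact Finset.sum_congr rfl fun s _ => by ring
      have hSj : ∀ j : ℕ, μ * S j = ((d:ℝ)/c) * fourierTransform Q (2 * π * j / q) * S j := by
        intro j
        calc μ * S j = ∑ i : Fin q, (μ * v i) * Real.sin (((i:ℕ):ℝ) * (2 * π * j / q)) := by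
              rw [hSdef]
              rw [Finset.mul_sum]
              exact Finset.sum_congr rfl fun i _ => by ring
          _ = ∑ i : Fin q, (((d:ℝ)/c) * ∑ s : Fin q, fuzzyOp Q q i s * v s)
                * Real.sin (((i:ℕ):ℝ) * (2 * π * j / q)) :=
              Finset.sum_congr rfl fun i _ => by rw [hAv i]
          _ = ((d:ℝ)/c) * ∑ i : Fin q, ∑ s : Fin q,
                (fuzzyOp Q q i s * Real.sin (((i:ℕ):ℝ) * (2 * π * j / q))) * v s := by
              rw [Finset.mul_sum]
              refine Finset.sum_congr rfl fun i _ => ?_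
              have hinner : ∑ s : Fin q,
                  (fuzzyOp Q q i s * Real.sin (((i:ℕ):ℝ) * (2 * π * j / q))) * v s
                  = (∑ s : Fin q, fuzzyOp Q q i s * v s) * Real.sin (((i:ℕ):ℝ) * (2 * π * j / q)) := by
                rw [Finset.sum_mul]
                exact Finset.sum_congr rfl fun s _ => by ring
              rw [hinner]
              ring
          _ = ((d:ℝ)/c) * ∑ s : Fin q, ∑ i : Fin q,
                (fuzzyOp Q q i s * Real.sin (((i:ℕ):ℝ) * (2 * π * j / q))) * v s := by
              rw [Finset.sum_comm]
          _ = ((d:ℝ)/c) * ∑ s : Fin q,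
                (∑ i : Fin q, fuzzyOp Q q s i * Real.sin (((i:ℕ):ℝ) * (2 * π * j / q))) * v s := by
              congr 1
              refine Finset.sum_congr rfl fun s _ => ?_
              rw [Finset.sum_mul]
              exact Finset.sum_congr rfl fun i _ => by rw [fuzzy_symm Q hsymm q i s]
          _ = ((d:ℝ)/c) * ∑ s : Fin q,
                (fourierTransform Q (2 * π * j / q) * Real.sin (((s:ℕ):ℝ) * (2 * π * j / q))) * v s := by
              congr 1
              exact Finset.sum_congr rfl fun s _ => by
                rw [Arow_sin Q hsymm hsum q hq0 j s]
          _ = ((d:ℝ)/c) * fourierTransform Q (2 * π * j / q) * S j := by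
              rw [hSdef]
              show _ = ((d:ℝ)/c) * fourierTransform Q (2 * π * j / q)
                * ∑ i : Fin q, v i * Real.sin (((i:ℕ):ℝ) * (2 * π * j / q))
              rw [Finset.mul_sum, Finset.mul_sum]
              exact Finset.sum_congr rfl fun s _ => by ring
      by_cases hall : ∀ j, 1 ≤ j → j ≤ q - 1 → C j = 0 ∧ S j = 0
      · -- then v = 0, contradiction
        exfalso
        apply hv0
        funext s1
        show v s1 = 0
        have hinvf : ∑ j ∈ Finset.range q,
            (C j * Real.cos (((s1:ℕ):ℝ) * (2 * π * j / q))
              + S j * Real.sin (((s1:ℕ):ℝ) * (2 * π * j / q))) = (q:ℝ) * v s1 := by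
          have hterm : ∀ j ∈ Finset.range q,
              C j * Real.cos (((s1:ℕ):ℝ) * (2 * π * j / q))
                + S j * Real.sin (((s1:ℕ):ℝ) * (2 * π * j / q))
              = ∑ t : Fin q, v t * Real.cos (2 * π * (((s1:ℕ):ℝ) - ((t:ℕ):ℝ)) * j / q) := by
            intro j _
            rw [hCdef, hSdef]
            show (∑ i : Fin q, v i * Real.cos (((i:ℕ):ℝ) * (2 * π * j / q)))
                  * Real.cos (((s1:ℕ):ℝ) * (2 * π * j / q))
                + (∑ i : Fin q, v i * Real.sin (((i:ℕ):ℝ) * (2 * π * j / q)))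
                  * Real.sin (((s1:ℕ):ℝ) * (2 * π * j / q)) = _
            rw [Finset.sum_mul, Finset.sum_mul, ← Finset.sum_add_distrib]
            refine Finset.sum_congr rfl fun t _ => ?_
            have harg : 2 * π * (((s1:ℕ):ℝ) - ((t:ℕ):ℝ)) * j / q
                = ((s1:ℕ):ℝ) * (2 * π * j / q) - ((t:ℕ):ℝ) * (2 * π * j / q) := by
              field_simp
            rw [harg, Real.cos_sub]
            ring
          rw [Finset.sum_congr rfl hterm, Finset.sum_comm]
          have h3 : ∀ t : Fin q, ∑ j ∈ Finset.range q,
              v t * Real.cos (2 * π * (((s1:ℕ):ℝ) - ((t:ℕ):ℝ)) * j / q)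
              = v t * (if s1 = t then (q:ℝ) else 0) := by
            intro t
            rw [← Finset.mul_sum, inv_sum q hq0 s1 t]
          rw [Finset.sum_congr rfl fun t _ => h3 t]
          simp [mul_ite, mul_zero, Finset.sum_ite_eq]
          ring
        have hzero : ∀ j ∈ Finset.range q,
            C j * Real.cos (((s1:ℕ):ℝ) * (2 * π * j / q))
              + S j * Real.sin (((s1:ℕ):ℝ) * (2 * π * j / q)) = 0 := by
          intro j hjmem
          rcases Nat.eq_zero_or_pos j with rfl | hjpos
          · have hC0 : C 0 = 0 := by
              have h4 : C 0 = ∑ i : Fin q, v i := by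
                rw [hCdef]
                show ∑ i : Fin q, v i * Real.cos (((i:ℕ):ℝ) * (2 * π * (0:ℕ) / q)) = _
                refine Finset.sum_congr rfl fun i _ => ?_
                norm_num
              rw [h4, hσ]
            have hS0 : S 0 = 0 := by
              rw [hSdef]
              show ∑ i : Fin q, v i * Real.sin (((i:ℕ):ℝ) * (2 * π * (0:ℕ) / q)) = 0
              refine Finset.sum_eq_zero fun i _ => ?_
              norm_num
            rw [hC0, hS0]
            ring
          · have hmem := Finset.mem_range.1 hjmem
            obtain ⟨hC, hS⟩ := hall j hjpos (by omega)
            rw [hC, hS]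
            ring
        have h0 := hinvf
        rw [Finset.sum_eq_zero hzero] at h0
        rcases mul_eq_zero.1 h0.symm with h | h
        · exact absurd h hqne
        · exact h
      · push_neg at hall
        obtain ⟨j, hj1, hj2, hjne⟩ := hall
        have hμ : μ = (d:ℝ) * fourierTransform Q (2 * π * j / q) / c := by
          by_cases hCz : C j = 0
          · have hSz : S j ≠ 0 := hjne hCz
            have := hSj j
            have h5 : μ = ((d:ℝ)/c) * fourierTransform Q (2 * π * j / q) :=
              mul_right_cancel₀ hSz this
            rw [h5, div_mul_eq_mul_div]
          · have := hCj j
            have h5 : μ = ((d:ℝ)/c) * fourierTransform Q (2 * π * j / q) :=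
              mul_right_cancel₀ hCz this
            rw [h5, div_mul_eq_mul_div]
        by_cases hhalf : j ≤ q / 2
        · exact ⟨j, hj1, hhalf, hμ⟩
        · refine ⟨q - j, by omega, by omega, ?_⟩
          rw [hμ, ← ft_refl Q q j hq0 (by omega)]
    · rintro ⟨j, hj1, hj2, rfl⟩
      have hjq : j < q := by omega
      have hσv : ∑ s : Fin q, Real.cos (((s:ℕ):ℝ) * (2 * π * j / q)) = 0 := by
        have hnd : ¬ ((q:ℤ) ∣ (j:ℤ)) := by
          intro hdvd
          have hjpos : (0:ℤ) < (j:ℤ) := by exact_mod_cast Nat.pos_of_ne_zero (by omega)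
          have h2 := Int.le_of_dvd hjpos hdvd
          have h3 : (q:ℤ) ≤ (j:ℤ) := h2
          have : q ≤ j := by exact_mod_cast h3
          omega
        have h := cos_geom_sum q hq0 (j:ℤ) hnd
        rw [Fin.sum_univ_eq_sum_range (fun sn : ℕ => Real.cos ((sn:ℝ) * (2 * π * j / q))) q]
        rw [← h]
        refine Finset.sum_congr rfl fun s _ => ?_
        congr 1
        push_cast
        ring
      refine ⟨fun s => Real.cos (((s:ℕ):ℝ) * (2 * π * j / q)), ?_, hσv, ?_⟩
      · intro h
        have h0 := congrFun h (⟨0, by omega⟩ : Fin q)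
        simp at h0
      · rw [hfder]
        funext i
        rw [Lmap_apply]
        show ((d:ℝ) / c) * (∑ s : Fin q, fuzzyOp Q q i s * Real.cos (((s:ℕ):ℝ) * (2 * π * j / q)))
            - ((d:ℝ) / q) * (∑ s : Fin q, Real.cos (((s:ℕ):ℝ) * (2 * π * j / q))) = _
        rw [hσv, mul_zero, sub_zero, Arow_cos Q hsymm hsum q hq0 j i]
        show ((d:ℝ) / c) * (fourierTransform Q (2 * π * j / q) * Real.cos (((i:ℕ):ℝ) * (2 * π * j / q)))
            = ((d:ℝ) * fourierTransform Q (2 * π * j / q) / c) * Real.cos (((i:ℕ):ℝ) * (2 * π * j / q))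
        ring
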